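/- Let A₁, A₂ be 3×4 real matrices of rank 3 whose kernels are distinct lines in ℝ⁴, and let F be the associated fundamental matrix defined by F_{ij} = (-1)^{i+j} det [A₁ without row j; A₂ without row i]. Then F has rank exactly 2. -/

import Mathlib

open Matrix

/-- The 4×4 matrix obtained by stacking `A₁` with row `j` deleted on top of
`A₂` with row `i` deleted. -/
noncomputable def stackedMinor (A₁ A₂ : Matrix (Fin 3) (Fin 4) ℝ)
    (i j : Fin 3) : Matrix (Fin 4) (Fin 4) ℝ :=
  Matrix.reindex finSumFinEquiv (Equiv.refl (Fin 4))
    (Matrix.fromRows (A₁.submatrix j.succAbove id) (A₂.submatrix i.succAbove id))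

/-- The fundamental matrix of the camera pair `(A₁, A₂)`. -/
noncomputable def fundamentalMatrix (A₁ A₂ : Matrix (Fin 3) (Fin 4) ℝ) :
    Matrix (Fin 3) (Fin 3) ℝ :=
  fun i j => (-1 : ℝ) ^ ((i : ℕ) + (j : ℕ)) * (stackedMinor A₁ A₂ i j).det

/-! ### Auxiliary material -/

lemma stackedMinor_eq (A₁ A₂ : Matrix (Fin 3) (Fin 4) ℝ) (i j : Fin 3) :
    stackedMinor A₁ A₂ i j =
      Matrix.of ![A₁ (j.succAbove 0), A₁ (j.succAbove 1), A₂ (i.succAbove 0), A₂ (i.succAbove 1)] := by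
  ext k l
  fin_cases k <;> rfl

/-- The canonical camera `[I ∣ 0]`. -/
def Ione : Matrix (Fin 3) (Fin 4) ℝ :=
  Matrix.of fun i j => if (j : ℕ) = (i : ℕ) then 1 else 0

/-- The (negated) cross-product matrix. -/
def crossMat (b : Fin 3 → ℝ) : Matrix (Fin 3) (Fin 3) ℝ :=
  !![0, b 2, -(b 1); -(b 2), 0, b 0; b 1, -(b 0), 0]

set_option maxHeartbeats 2000000 in
lemma fund_Ione (A : Matrix (Fin 3) (Fin 4) ℝ) :
    fundamentalMatrix Ione A =
      crossMat (fun i => A i 3) * A.submatrix id Fin.castSucc := by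
  ext i j
  rw [fundamentalMatrix, stackedMinor_eq]
  fin_cases i <;> fin_cases j <;>
    simp [Matrix.det_succ_row_zero, Fin.sum_univ_succ, crossMat, Ione, Matrix.mul_apply,
      Fin.sum_univ_three, Fin.succAbove, Matrix.submatrix_apply,
      show Fin.succ (2:Fin 3) = 3 from rfl, show Fin.castSucc (2:Fin 3) = 2 from rfl,
      show ((3:Fin 4):ℕ) = 3 from rfl, show ((2:Fin 4):ℕ) = 2 from rfl,
      show ((1:Fin 4):ℕ) = 1 from rfl] <;>
    norm_num <;> ring

lemma stackedMinor_mul (A₁ A₂ : Matrix (Fin 3) (Fin 4) ℝ) (H : Matrix (Fin 4) (Fin 4) ℝ)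
    (i j : Fin 3) :
    stackedMinor (A₁ * H) (A₂ * H) i j = stackedMinor A₁ A₂ i j * H := by
  have h₁ : (A₁ * H).submatrix j.succAbove id = A₁.submatrix j.succAbove id * H := by
    ext k l; simp [Matrix.mul_apply, Matrix.submatrix_apply]
  have h₂ : (A₂ * H).submatrix i.succAbove id = A₂.submatrix i.succAbove id * H := by
    ext k l; simp [Matrix.mul_apply, Matrix.submatrix_apply]
  rw [stackedMinor, h₁, h₂, ← Matrix.fromRows_mul, stackedMinor]
  ext k l
  rcases (finSumFinEquiv.symm k) with a | a <;>
    simp [Matrix.reindex_apply, Matrix.submatrix_apply, Matrix.mul_apply, Matrix.fromRows]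

lemma fund_mul (A₁ A₂ : Matrix (Fin 3) (Fin 4) ℝ) (H : Matrix (Fin 4) (Fin 4) ℝ) :
    fundamentalMatrix (A₁ * H) (A₂ * H) = H.det • fundamentalMatrix A₁ A₂ := by
  ext i j
  rw [fundamentalMatrix, stackedMinor_mul, Matrix.det_mul]
  simp [fundamentalMatrix]
  ring

lemma ker_crossMat {b : Fin 3 → ℝ} (hb : b ≠ 0) :
    LinearMap.ker (crossMat b).mulVecLin = Submodule.span ℝ {b} := by
  apply le_antisymm
  · intro x hx
    have h : crossMat b *ᵥ x = 0 := hx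
    have h0 := congrFun h 0
    have h1 := congrFun h 1
    have h2 := congrFun h 2
    simp [crossMat, Matrix.mulVec, dotProduct, Fin.sum_univ_three] at h0 h1 h2
    have hcase : b 0 ≠ 0 ∨ b 1 ≠ 0 ∨ b 2 ≠ 0 := by
      by_contra hc
      push_neg at hc
      exact hb (funext fun i => by fin_cases i <;> simp [hc.1, hc.2.1, hc.2.2])
    rcases hcase with hb0 | hb1 | hb2
    · refine Submodule.mem_span_singleton.2 ⟨x 0 / b 0, funext fun i => ?_⟩
      fin_cases i <;> simp only [show ((⟨2, by norm_num⟩ : Fin 3)) = 2 from rfl,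
        show ((⟨1, by norm_num⟩ : Fin 3)) = 1 from rfl, show ((⟨0, by norm_num⟩ : Fin 3)) = 0 from rfl] <;>
        simp only [Pi.smul_apply, smul_eq_mul] <;> field_simp <;> linarith
    · refine Submodule.mem_span_singleton.2 ⟨x 1 / b 1, funext fun i => ?_⟩
      fin_cases i <;> simp only [show ((⟨2, by norm_num⟩ : Fin 3)) = 2 from rfl,
        show ((⟨1, by norm_num⟩ : Fin 3)) = 1 from rfl, show ((⟨0, by norm_num⟩ : Fin 3)) = 0 from rfl] <;>
        simp only [Pi.smul_apply, smul_eq_mul] <;> field_simp <;> linarith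
    · refine Submodule.mem_span_singleton.2 ⟨x 2 / b 2, funext fun i => ?_⟩
      fin_cases i <;> simp only [show ((⟨2, by norm_num⟩ : Fin 3)) = 2 from rfl,
        show ((⟨1, by norm_num⟩ : Fin 3)) = 1 from rfl, show ((⟨0, by norm_num⟩ : Fin 3)) = 0 from rfl] <;>
        simp only [Pi.smul_apply, smul_eq_mul] <;> field_simp <;> linarith
  · rw [Submodule.span_le, Set.singleton_subset_iff]
    show crossMat b *ᵥ b = 0
    funext i
    fin_cases i <;> simp [crossMat, Matrix.mulVec, dotProduct, Fin.sum_univ_three] <;> ring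

lemma rank_crossMat {b : Fin 3 → ℝ} (hb : b ≠ 0) : (crossMat b).rank = 2 := by
  have h := LinearMap.finrank_range_add_finrank_ker (crossMat b).mulVecLin
  rw [ker_crossMat hb, finrank_span_singleton hb, Module.finrank_fin_fun] at h
  rw [Matrix.rank]
  omega

lemma isUnit_det_of_rank_eq {B : Matrix (Fin 3) (Fin 3) ℝ} (h : B.rank = 3) :
    IsUnit B.det := by
  rw [← Matrix.isUnit_iff_isUnit_det, ← Matrix.mulVec_surjective_iff_isUnit]
  have ht : LinearMap.range B.mulVecLin = ⊤ := by
    apply Submodule.eq_top_of_finrank_eq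
    rw [Module.finrank_fin_fun]
    exact h
  intro y
  obtain ⟨x, hx⟩ := LinearMap.range_eq_top.1 ht y
  exact ⟨x, hx⟩

lemma rank_cross_mul (B : Matrix (Fin 3) (Fin 3) ℝ) (b : Fin 3 → ℝ) (hb : b ≠ 0)
    (hr : 2 ≤ B.rank) (hnotin : B.rank = 2 → b ∉ LinearMap.range B.mulVecLin) :
    (crossMat b * B).rank = 2 := by
  have hle : B.rank ≤ 3 := le_trans (Matrix.rank_le_card_width B) (by simp)
  have hcase : B.rank = 2 ∨ B.rank = 3 := by omega
  rcases hcase with h | h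
  · have hker : LinearMap.ker (crossMat b * B).mulVecLin = LinearMap.ker B.mulVecLin := by
      ext x
      simp only [LinearMap.mem_ker, Matrix.mulVecLin_apply]
      constructor
      · intro hx
        rw [← Matrix.mulVec_mulVec] at hx
        have hmem : B *ᵥ x ∈ LinearMap.ker (crossMat b).mulVecLin := hx
        rw [ker_crossMat hb] at hmem
        obtain ⟨c, hc⟩ := Submodule.mem_span_singleton.1 hmem
        rcases eq_or_ne c 0 with rfl | hc0
        · rw [← hc]; simp
        · exfalso
          apply hnotin h
          have : b = c⁻¹ • (B *ᵥ x) := by rw [← hc, smul_smul, inv_mul_cancel₀ hc0, one_smul]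
          rw [this]
          exact Submodule.smul_mem _ _ ⟨x, rfl⟩
      · intro hx
        rw [← Matrix.mulVec_mulVec, hx, Matrix.mulVec_zero]
    have h1 := LinearMap.finrank_range_add_finrank_ker (crossMat b * B).mulVecLin
    have h2 := LinearMap.finrank_range_add_finrank_ker B.mulVecLin
    rw [hker] at h1
    rw [Module.finrank_fin_fun] at h1 h2
    rw [Matrix.rank] at *
    omega
  · rw [Matrix.rank_mul_eq_left_of_isUnit_det _ _ (isUnit_det_of_rank_eq h)]
    exact rank_crossMat hb

lemma mulVec_split (A : Matrix (Fin 3) (Fin 4) ℝ) (x : Fin 4 → ℝ) :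
    A *ᵥ x = (A.submatrix id Fin.castSucc) *ᵥ (x ∘ Fin.castSucc) + x 3 • (fun i => A i 3) := by
  funext i
  simp [Matrix.mulVec, dotProduct, Fin.sum_univ_four, Fin.sum_univ_three,
    show Fin.castSucc (0:Fin 3) = (0:Fin 4) from rfl, show Fin.castSucc (1:Fin 3) = (1:Fin 4) from rfl,
    show Fin.castSucc (2:Fin 3) = (2:Fin 4) from rfl]
  ring

lemma range_decomp (A : Matrix (Fin 3) (Fin 4) ℝ) :
    LinearMap.range A.mulVecLin =
      LinearMap.range (A.submatrix id Fin.castSucc).mulVecLin ⊔ Submodule.span ℝ {fun i => A i 3} := by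
  apply le_antisymm
  · rintro y ⟨x, rfl⟩
    rw [Matrix.mulVecLin_apply, mulVec_split]
    exact Submodule.add_mem_sup ⟨x ∘ Fin.castSucc, rfl⟩
      (Submodule.smul_mem _ _ (Submodule.mem_span_singleton_self _))
  · rw [sup_le_iff]
    constructor
    · rintro y ⟨x, rfl⟩
      refine ⟨Fin.snoc x 0, ?_⟩
      rw [Matrix.mulVecLin_apply, Matrix.mulVecLin_apply, mulVec_split]
      simp [Fin.snoc_castSucc, show (Fin.snoc x 0 : Fin 4 → ℝ) 3 = 0 from Fin.snoc_last _ _]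
    · rw [Submodule.span_le, Set.singleton_subset_iff]
      refine ⟨Fin.snoc 0 1, ?_⟩
      rw [Matrix.mulVecLin_apply, mulVec_split]
      simp [show (Fin.snoc (0 : Fin 3 → ℝ) 1 : Fin 4 → ℝ) 3 = 1 from Fin.snoc_last _ _]

lemma rank_facts {A : Matrix (Fin 3) (Fin 4) ℝ} (hA : A.rank = 3)
    (hb : (fun i => A i 3) ≠ 0) :
    2 ≤ (A.submatrix id Fin.castSucc).rank ∧
      ((A.submatrix id Fin.castSucc).rank = 2 →
        (fun i => A i 3) ∉ LinearMap.range (A.submatrix id Fin.castSucc).mulVecLin) := by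
  set B := A.submatrix id Fin.castSucc with hB
  set b : Fin 3 → ℝ := fun i => A i 3 with hbdef
  have hsum := Submodule.finrank_sup_add_finrank_inf_eq
    (LinearMap.range B.mulVecLin) (Submodule.span ℝ {b})
  rw [finrank_span_singleton hb] at hsum
  have hsup : Module.finrank ℝ ↥(LinearMap.range B.mulVecLin ⊔ Submodule.span ℝ {b}) = 3 := by
    rw [← range_decomp A]
    exact hA
  rw [hsup] at hsum
  have hBrank : Module.finrank ℝ ↥(LinearMap.range B.mulVecLin) = B.rank := rfl
  rw [hBrank] at hsum
  constructor
  · omega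
  · intro h2 hmem
    have hinf : Module.finrank ℝ
        ↥(LinearMap.range B.mulVecLin ⊓ Submodule.span ℝ {b}) = 0 := by omega
    rw [Submodule.finrank_eq_zero] at hinf
    have : b ∈ LinearMap.range B.mulVecLin ⊓ Submodule.span ℝ {b} :=
      ⟨hmem, Submodule.mem_span_singleton_self _⟩
    rw [hinf] at this
    exact hb (by simpa using this)

lemma exists_H {A : Matrix (Fin 3) (Fin 4) ℝ} (hA : A.rank = 3) :
    ∃ H : Matrix (Fin 4) (Fin 4) ℝ, IsUnit H.det ∧ A * H = Ione := by
  have hrange : LinearMap.range A.mulVecLin = ⊤ := by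
    apply Submodule.eq_top_of_finrank_eq
    rw [Module.finrank_fin_fun]; exact hA
  have hsurj : ∀ y : Fin 3 → ℝ, ∃ x, A *ᵥ x = y := fun y => by
    obtain ⟨x, hx⟩ := LinearMap.range_eq_top.1 hrange y
    exact ⟨x, hx⟩
  choose c hc using fun j : Fin 3 => hsurj (Pi.single j 1)
  have hkerrank : Module.finrank ℝ (LinearMap.ker A.mulVecLin) = 1 := by
    have h := LinearMap.finrank_range_add_finrank_ker A.mulVecLin
    rw [Module.finrank_fin_fun, hrange, finrank_top, Module.finrank_fin_fun] at h
    omega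
  have hkerne : LinearMap.ker A.mulVecLin ≠ ⊥ := by
    intro hbot
    rw [hbot, finrank_bot] at hkerrank
    omega
  obtain ⟨k, hkmem, hkne⟩ := (LinearMap.ker A.mulVecLin).ne_bot_iff.1 hkerne
  have hAk : A *ᵥ k = 0 := hkmem
  set H : Matrix (Fin 4) (Fin 4) ℝ :=
    Matrix.of fun r (j : Fin 4) => if h : (j : ℕ) < 3 then c ⟨j, h⟩ r else k r with hH
  have hcol : ∀ j : Fin 4, (fun l => H l j) =
      if h : (j : ℕ) < 3 then c ⟨j, h⟩ else k := by
    intro j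
    by_cases h : (j : ℕ) < 3 <;> simp [hH, h]
  have hAH : A * H = Ione := by
    ext i j
    have key : (A * H) i j = (A *ᵥ fun l => H l j) i := by
      simp [Matrix.mul_apply, Matrix.mulVec, dotProduct]
    rw [key, hcol j]
    by_cases h : (j : ℕ) < 3
    · rw [dif_pos h, hc]
      simp [Ione, Pi.single_apply, Fin.ext_iff, eq_comm]
    · rw [dif_neg h, hAk]
      have : (j : ℕ) ≠ (i : ℕ) := by omega
      simp [Ione, this]
  refine ⟨H, ?_, hAH⟩
  rw [← Matrix.isUnit_iff_isUnit_det, ← Matrix.mulVec_injective_iff_isUnit]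
  have hker0 : ∀ x, H *ᵥ x = 0 → x = 0 := by
    intro x hx
    have hIx : Ione *ᵥ x = 0 := by
      rw [← hAH, ← Matrix.mulVec_mulVec, hx, Matrix.mulVec_zero]
    have h0 := congrFun hIx 0
    have h1 := congrFun hIx 1
    have h2 := congrFun hIx 2
    simp [Ione, Matrix.mulVec, dotProduct, Fin.sum_univ_four, show ((0:Fin 4):ℕ) = 0 from rfl, show ((1:Fin 4):ℕ) = 1 from rfl,
      show ((2:Fin 4):ℕ) = 2 from rfl, show ((3:Fin 4):ℕ) = 3 from rfl] at h0 h1 h2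
    have hx3 : H *ᵥ x = x 3 • k := by
      funext r
      simp [hH, Matrix.mulVec, dotProduct, Fin.sum_univ_four, h0, h1, h2, show ((0:Fin 4):ℕ) = 0 from rfl, show ((1:Fin 4):ℕ) = 1 from rfl,
      show ((2:Fin 4):ℕ) = 2 from rfl, show ((3:Fin 4):ℕ) = 3 from rfl]
      ring
    rw [hx3] at hx
    have hx30 : x 3 = 0 := by
      rcases smul_eq_zero.1 hx with h | h
      · exact h
      · exact absurd h hkne
    funext j
    fin_cases j <;> simp only [Pi.zero_apply] <;> first | exact h0 | exact h1 | exact h2 | exact hx30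
  intro x y hxy
  have : H *ᵥ (x - y) = 0 := by
    rw [Matrix.mulVec_sub, hxy, sub_self]
  have := hker0 _ this
  exact sub_eq_zero.1 this

theorem fundamentalMatrix_rank_eq_two
    (A₁ A₂ : Matrix (Fin 3) (Fin 4) ℝ)
    (hA₁ : A₁.rank = 3) (hA₂ : A₂.rank = 3)
    (hker : LinearMap.ker A₁.mulVecLin ≠ LinearMap.ker A₂.mulVecLin) :
    (fundamentalMatrix A₁ A₂).rank = 2 := by
  obtain ⟨H, hdet, hAH⟩ := exists_H hA₁
  have hfund : fundamentalMatrix (A₁ * H) (A₂ * H) = H.det • fundamentalMatrix A₁ A₂ :=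
    fund_mul A₁ A₂ H
  have hsmul : (H.det • fundamentalMatrix A₁ A₂).rank = (fundamentalMatrix A₁ A₂).rank := by
    have hdiag : H.det • fundamentalMatrix A₁ A₂ =
        (Matrix.diagonal (fun _ : Fin 3 => H.det)) * fundamentalMatrix A₁ A₂ := by
      ext i j
      simp [Matrix.diagonal_mul]
    rw [hdiag]
    apply Matrix.rank_mul_eq_right_of_isUnit_det
    rw [Matrix.det_diagonal]
    simpa using hdet.pow 3
  set A₂' := A₂ * H with hA₂'def
  have hA₂'rank : A₂'.rank = 3 := by
    rw [hA₂'def, Matrix.rank_mul_eq_left_of_isUnit_det _ _ hdet]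
    exact hA₂
  have hA₁'rank : (A₁ * H).rank = 3 := by
    rw [Matrix.rank_mul_eq_left_of_isUnit_det _ _ hdet]
    exact hA₁
  set b' : Fin 3 → ℝ := fun i => A₂' i 3 with hb'def
  have hb' : b' ≠ 0 := by
    intro hb0
    set v : Fin 4 → ℝ := Fin.snoc (0 : Fin 3 → ℝ) 1 with hv
    have hv3 : v 3 = 1 := by
      rw [hv, show (3:Fin 4) = Fin.last 3 from rfl]
      exact Fin.snoc_last _ _
    have hvc : v ∘ Fin.castSucc = 0 := by
      funext i
      simp [hv]
    have hvne : v ≠ 0 := by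
      intro h
      have := congrFun h 3
      rw [hv3] at this
      exact one_ne_zero this
    have hvker2 : v ∈ LinearMap.ker A₂'.mulVecLin := by
      show A₂' *ᵥ v = 0
      rw [mulVec_split, hvc, Matrix.mulVec_zero, hv3]
      rw [show (fun i => A₂' i 3) = b' from rfl, hb0]
      simp
    have hvker1 : v ∈ LinearMap.ker (A₁ * H).mulVecLin := by
      show (A₁ * H) *ᵥ v = 0
      rw [hAH]
      funext i
      have hv0 : v 0 = 0 := congrFun hvc 0
      have hv1 : v 1 = 0 := congrFun hvc 1
      have hv2 : v 2 = 0 := congrFun hvc 2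
      fin_cases i <;>
        simp [Ione, Matrix.mulVec, dotProduct, Fin.sum_univ_four,
          show ((0:Fin 4):ℕ) = 0 from rfl, show ((1:Fin 4):ℕ) = 1 from rfl,
          show ((2:Fin 4):ℕ) = 2 from rfl, show ((3:Fin 4):ℕ) = 3 from rfl,
          hv0, hv1, hv2, hv3]
    have hk2 : Module.finrank ℝ (LinearMap.ker A₂'.mulVecLin) = 1 := by
      have h := LinearMap.finrank_range_add_finrank_ker A₂'.mulVecLin
      rw [Module.finrank_fin_fun] at h
      have : Module.finrank ℝ ↥(LinearMap.range A₂'.mulVecLin) = 3 := hA₂'rank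
      omega
    have hk1 : Module.finrank ℝ (LinearMap.ker (A₁ * H).mulVecLin) = 1 := by
      have h := LinearMap.finrank_range_add_finrank_ker (A₁ * H).mulVecLin
      rw [Module.finrank_fin_fun] at h
      have : Module.finrank ℝ ↥(LinearMap.range (A₁ * H).mulVecLin) = 3 := hA₁'rank
      omega
    have hspan2 : Submodule.span ℝ {v} = LinearMap.ker A₂'.mulVecLin := by
      apply Submodule.eq_of_le_of_finrank_eq
      · rw [Submodule.span_le, Set.singleton_subset_iff]
        exact hvker2
      · rw [finrank_span_singleton hvne, hk2]
    have hspan1 : Submodule.span ℝ {v} = LinearMap.ker (A₁ * H).mulVecLin := by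
      apply Submodule.eq_of_le_of_finrank_eq
      · rw [Submodule.span_le, Set.singleton_subset_iff]
        exact hvker1
      · rw [finrank_span_singleton hvne, hk1]
    have hkereq : LinearMap.ker (A₁ * H).mulVecLin = LinearMap.ker A₂'.mulVecLin :=
      hspan1.symm.trans hspan2
    have hcomap : ∀ A : Matrix (Fin 3) (Fin 4) ℝ,
        LinearMap.ker (A * H).mulVecLin =
          Submodule.comap H.mulVecLin (LinearMap.ker A.mulVecLin) := by
      intro A
      rw [Matrix.mulVecLin_mul, LinearMap.ker_comp]
    rw [hA₂'def, hcomap, hcomap] at hkereq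
    have hHsurj : Function.Surjective H.mulVecLin := by
      have := Matrix.mulVec_surjective_iff_isUnit.2 ((Matrix.isUnit_iff_isUnit_det H).2 hdet)
      exact this
    exact hker (Submodule.comap_injective_of_surjective hHsurj hkereq)
  rw [← hsmul, ← hfund, hAH, fund_Ione]
  obtain ⟨hr2, hnotin⟩ := rank_facts hA₂'rank hb'
  exact rank_cross_mul _ _ hb' hr2 hnotin
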